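/- The superalgebra W is the internal direct sum W = (R·W + Q·W) ⊕ (ker T ∩ ker Q*): every element of W is uniquely the sum of an element of the ideal of W generated by R := η^{ij} p_i p_j and Q := ξ^i p_i, and an element annihilated by both T and Q*. -/

import Mathlib

open MvPolynomial Finset

namespace SpinQuant

noncomputable section

/-- Diagonal entries of the signature-`(p,q)` bilinear form `η` on `ℝⁿ`, `n = p + q`:
`+1` for the first `p` indices and `-1` for the last `q` ones.  Since `η` is diagonal
and equal to its inverse, these are simultaneously the `η_{ii}` and the `η^{ii}`. -/
def eta (p q : ℕ) (i : Fin (p + q)) : ℝ := if (i : ℕ) < p then 1 else -1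

/-- The supercommutative algebra `W = ℝ[p₁,…,pₙ] ⊗ Λ(ξ¹,…,ξⁿ)`, modeled as families of
polynomials in the even variables `p_i`, indexed by the subsets of `Fin n` recording the
monomials in the odd variables `ξ^i` (a subset `S` stands for the exterior monomial
`ξ^{i₁} ∧ ⋯ ∧ ξ^{iκ}` with `i₁ < ⋯ < iκ` the elements of `S`). -/
abbrev W (p q : ℕ) := Finset (Fin (p + q)) → MvPolynomial (Fin (p + q)) ℝ

/-- Koszul sign of moving `ξ^i` through the monomial `ξ^S`. -/
def sgn (p q : ℕ) (i : Fin (p + q)) (S : Finset (Fin (p + q))) : ℝ :=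
  (-1) ^ (S.filter (fun j => j < i)).card

/-- Multiplication by the even variable `p_i`. -/
def pMul (p q : ℕ) (i : Fin (p + q)) : Module.End ℝ (W p q) where
  toFun f S := X i * f S
  map_add' f g := by funext S; simp [mul_add]
  map_smul' c f := by funext S; simp [mul_smul_comm]

/-- The partial derivative `∂/∂p_i`. -/
def pD (p q : ℕ) (i : Fin (p + q)) : Module.End ℝ (W p q) where
  toFun f S := pderiv i (f S)
  map_add' f g := by funext S; simp
  map_smul' c f := by funext S; simp

/-- Exterior multiplication by the odd variable `ξ^i`. -/
def xiMul (p q : ℕ) (i : Fin (p + q)) : Module.End ℝ (W p q) where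
  toFun f S := if i ∈ S then sgn p q i S • f (S.erase i) else 0
  map_add' f g := by funext S; by_cases h : i ∈ S <;> simp [h, smul_add]
  map_smul' c f := by funext S; by_cases h : i ∈ S <;> simp [h, smul_smul, mul_comm]

/-- The odd superderivation `∂/∂ξ^i`, determined by `∂_{ξ^i}(ξ^j) = δ_i^j`. -/
def xiD (p q : ℕ) (i : Fin (p + q)) : Module.End ℝ (W p q) where
  toFun f S := if i ∈ S then 0 else sgn p q i (insert i S) • f (insert i S)
  map_add' f g := by funext S; by_cases h : i ∈ S <;> simp [h, smul_add]
  map_smul' c f := by funext S; by_cases h : i ∈ S <;> simp [h, smul_smul, mul_comm]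

/-- `R`, multiplication by `η^{ij} p_i p_j`. -/
def opR (p q : ℕ) : Module.End ℝ (W p q) := ∑ i, eta p q i • (pMul p q i * pMul p q i)

/-- The even Euler operator `ℰ = p_i ∂_{p_i}`. -/
def opE (p q : ℕ) : Module.End ℝ (W p q) := ∑ i, pMul p q i * pD p q i

/-- The trace operator `T = η_{ij} ∂_{p_i} ∂_{p_j}`. -/
def opT (p q : ℕ) : Module.End ℝ (W p q) := ∑ i, eta p q i • (pD p q i * pD p q i)

/-- The odd Euler operator `Σ = ξ^i ∂_{ξ^i}`. -/
def opS (p q : ℕ) : Module.End ℝ (W p q) := ∑ i, xiMul p q i * xiD p q i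

/-- `Q`, multiplication by `ξ^i p_i`. -/
def opQ (p q : ℕ) : Module.End ℝ (W p q) := ∑ i, xiMul p q i * pMul p q i

/-- `Q* = ∂_{ξ^i} ∂_{p_i}`. -/
def opQs (p q : ℕ) : Module.End ℝ (W p q) := ∑ i, xiD p q i * pD p q i

/-- The Koszul differential `δ = η_{ij} ξ^i ∂_{p_j}`. -/
def opd (p q : ℕ) : Module.End ℝ (W p q) := ∑ i, eta p q i • (xiMul p q i * pD p q i)

/-- The Koszul codifferential `δ* = η^{ij} p_i ∂_{ξ^j}`. -/
def opds (p q : ℕ) : Module.End ℝ (W p q) := ∑ i, eta p q i • (pMul p q i * xiD p q i)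

/-- The bihomogeneous component `W_{k,κ}`: polynomial degree `k` in the `p` variables and
exterior degree `κ` in the `ξ` variables. -/
def Wc (p q : ℕ) (k κ : ℕ) : Submodule ℝ (W p q) where
  carrier := { f | (∀ S, f S ∈ homogeneousSubmodule (Fin (p + q)) ℝ k) ∧
      ∀ S, S.card ≠ κ → f S = 0 }
  add_mem' := fun ha hb => ⟨fun S => add_mem (ha.1 S) (hb.1 S),
    fun S h => by simp [Pi.add_apply, ha.2 S h, hb.2 S h]⟩
  zero_mem' := ⟨fun S => zero_mem _, fun S _ => rfl⟩
  smul_mem' := fun c f hf => ⟨fun S => Submodule.smul_mem _ c (hf.1 S),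
    fun S h => by simp [Pi.smul_apply, hf.2 S h]⟩

/-- The component `W_{k,κ}` with integer indices, with the convention that it is the zero
subspace as soon as one of the indices is negative. -/
def WcZ (p q : ℕ) (k κ : ℤ) : Submodule ℝ (W p q) :=
  if 0 ≤ k ∧ 0 ≤ κ then Wc p q k.toNat κ.toNat else ⊥

/-! ### Auxiliary material for statement 15 -/

section AuxPoly

open Finsupp

lemma degree_sum_univ {n : ℕ} (d : Fin n →₀ ℕ) : d.degree = ∑ i, d i :=
  Finset.sum_subset (Finset.subset_univ _) (fun _ _ h => Finsupp.notMem_support_iff.mp h)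

lemma degree_add_single {n : ℕ} (d : Fin n →₀ ℕ) (i : Fin n) :
    (d + Finsupp.single i 1).degree = d.degree + 1 := by
  rw [degree_sum_univ, degree_sum_univ]
  simp only [Finsupp.add_apply]
  rw [Finset.sum_add_distrib]
  congr 1
  simp [Finsupp.single_apply]

lemma isHomogeneous_of_degree {n k : ℕ} {P : MvPolynomial (Fin n) ℝ}
    (h : ∀ d, MvPolynomial.coeff d P ≠ 0 → d.degree = k) : P.IsHomogeneous k := by
  intro d hd
  change (weight fun _ => (1:ℕ)) d = k
  rw [← Finsupp.degree_eq_weight_one]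
  exact h d hd

lemma isHomogeneous_degree_of_coeff {n k : ℕ} {P : MvPolynomial (Fin n) ℝ}
    (h : P.IsHomogeneous k) {d} (hd : MvPolynomial.coeff d P ≠ 0) : d.degree = k := by
  rw [Finsupp.degree_eq_weight_one]
  exact h hd

/-- Factorial weight for the Fischer pairing. -/
def wt (n : ℕ) (d : Fin n →₀ ℕ) : ℝ := ∏ i, ((d i).factorial : ℝ)

lemma wt_pos (n : ℕ) (d : Fin n →₀ ℕ) : 0 < wt n d :=
  Finset.prod_pos fun i _ => by exact_mod_cast (d i).factorial_pos

lemma wt_add_single (n : ℕ) (d : Fin n →₀ ℕ) (i : Fin n) :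
    wt n (d + Finsupp.single i 1) = ((d i : ℝ) + 1) * wt n d := by
  unfold wt
  rw [Finset.prod_eq_mul_prod_sdiff_singleton_of_mem (Finset.mem_univ i),
    Finset.prod_eq_mul_prod_sdiff_singleton_of_mem (Finset.mem_univ i)
      (fun j => ((d j).factorial : ℝ))]
  have h1 : ∀ j ∈ Finset.univ \ {i},
      (((d + Finsupp.single i 1 : Fin n →₀ ℕ) j).factorial : ℝ) = ((d j).factorial : ℝ) := by
    intro j hj
    simp only [Finset.mem_sdiff, Finset.mem_singleton] at hj
    rw [Finsupp.add_apply, Finsupp.single_apply, if_neg (fun h => hj.2 h.symm)]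
    norm_num
  rw [Finset.prod_congr rfl h1, Finsupp.add_apply, Finsupp.single_eq_same,
    Nat.factorial_succ]
  push_cast
  ring

/-- The Fischer pairing on polynomials. -/
def Bp {n : ℕ} (P Q : MvPolynomial (Fin n) ℝ) : ℝ :=
  ∑ d ∈ P.support, MvPolynomial.coeff d P * MvPolynomial.coeff d Q * wt n d

lemma Bp_eq_sum {n : ℕ} {P Q : MvPolynomial (Fin n) ℝ} {s : Finset (Fin n →₀ ℕ)}
    (h : P.support ⊆ s) :
    Bp P Q = ∑ d ∈ s, MvPolynomial.coeff d P * MvPolynomial.coeff d Q * wt n d :=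
  Finset.sum_subset h fun d _ hd => by
    rw [MvPolynomial.notMem_support_iff.mp hd, zero_mul, zero_mul]

lemma Bp_zero_left {n} (Q : MvPolynomial (Fin n) ℝ) : Bp 0 Q = 0 := by
  simp [Bp]

lemma Bp_zero_right {n} (P : MvPolynomial (Fin n) ℝ) : Bp P 0 = 0 := by
  simp [Bp]

lemma Bp_add_left {n} (P₁ P₂ Q : MvPolynomial (Fin n) ℝ) :
    Bp (P₁ + P₂) Q = Bp P₁ Q + Bp P₂ Q := by
  classical
  rw [Bp_eq_sum (s := P₁.support ∪ P₂.support) (MvPolynomial.support_add),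
    Bp_eq_sum (s := P₁.support ∪ P₂.support) Finset.subset_union_left,
    Bp_eq_sum (s := P₁.support ∪ P₂.support) Finset.subset_union_right,
    ← Finset.sum_add_distrib]
  exact Finset.sum_congr rfl fun d _ => by rw [MvPolynomial.coeff_add]; ring

lemma Bp_add_right {n} (P Q₁ Q₂ : MvPolynomial (Fin n) ℝ) :
    Bp P (Q₁ + Q₂) = Bp P Q₁ + Bp P Q₂ := by
  unfold Bp
  rw [← Finset.sum_add_distrib]
  exact Finset.sum_congr rfl fun d _ => by rw [MvPolynomial.coeff_add]; ring

lemma Bp_smul_left {n} (c : ℝ) (P Q : MvPolynomial (Fin n) ℝ) :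
    Bp (c • P) Q = c * Bp P Q := by
  rw [Bp_eq_sum (s := P.support) MvPolynomial.support_smul, Bp, Finset.mul_sum]
  exact Finset.sum_congr rfl fun d _ => by
    rw [MvPolynomial.coeff_smul, smul_eq_mul]; ring

lemma Bp_smul_right {n} (c : ℝ) (P Q : MvPolynomial (Fin n) ℝ) :
    Bp P (c • Q) = c * Bp P Q := by
  unfold Bp
  rw [Finset.mul_sum]
  exact Finset.sum_congr rfl fun d _ => by
    rw [MvPolynomial.coeff_smul, smul_eq_mul]; ring

lemma Bp_comm {n} (P Q : MvPolynomial (Fin n) ℝ) : Bp P Q = Bp Q P := by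
  classical
  rw [Bp_eq_sum (s := P.support ∪ Q.support) Finset.subset_union_left,
    Bp_eq_sum (s := P.support ∪ Q.support) Finset.subset_union_right]
  exact Finset.sum_congr rfl fun d _ => by ring

lemma Bp_self_nonneg {n} (P : MvPolynomial (Fin n) ℝ) : 0 ≤ Bp P P :=
  Finset.sum_nonneg fun d _ => mul_nonneg (mul_self_nonneg _) (wt_pos n d).le

lemma Bp_self_eq_zero {n} {P : MvPolynomial (Fin n) ℝ} (h : Bp P P = 0) : P = 0 := by
  by_contra hP
  obtain ⟨d, hd⟩ := MvPolynomial.ne_zero_iff.mp hP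
  have hmem : d ∈ P.support := MvPolynomial.mem_support_iff.mpr hd
  have h0 := (Finset.sum_eq_zero_iff_of_nonneg
    (fun d _ => mul_nonneg (mul_self_nonneg _) (wt_pos n d).le)).mp h d hmem
  rcases mul_eq_zero.mp h0 with h1 | h2
  · exact hd (mul_self_eq_zero.mp h1)
  · exact (wt_pos n d).ne' h2

lemma Bp_monomial_left {n} (d : Fin n →₀ ℕ) (a : ℝ) (Q : MvPolynomial (Fin n) ℝ) :
    Bp (MvPolynomial.monomial d a) Q = a * MvPolynomial.coeff d Q * wt n d := by
  rw [Bp_eq_sum (s := {d}) MvPolynomial.support_monomial_subset, Finset.sum_singleton,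
    MvPolynomial.coeff_monomial, if_pos rfl]

lemma coeff_pderiv {n} (i : Fin n) (Q : MvPolynomial (Fin n) ℝ) (d : Fin n →₀ ℕ) :
    MvPolynomial.coeff d (MvPolynomial.pderiv i Q)
      = ((d i : ℝ) + 1) * MvPolynomial.coeff (d + Finsupp.single i 1) Q := by
  induction Q using MvPolynomial.induction_on' with
  | monomial e a =>
    rw [MvPolynomial.pderiv_monomial, MvPolynomial.coeff_monomial,
      MvPolynomial.coeff_monomial]
    by_cases he : e = d + Finsupp.single i 1
    · subst he
      have hc : (d + Finsupp.single i 1) - Finsupp.single i 1 = d := by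
        ext j
        rw [Finsupp.tsub_apply, Finsupp.add_apply]
        omega
      rw [if_pos hc, if_pos rfl, Finsupp.add_apply, Finsupp.single_eq_same]
      push_cast
      ring
    · rw [if_neg he, mul_zero]
      by_cases h0 : e i = 0
      · split
        · rw [h0]; norm_num
        · rfl
      · have hne : e - Finsupp.single i 1 ≠ d := by
          intro hed
          apply he
          ext j
          rw [Finsupp.add_apply, ← hed, Finsupp.tsub_apply]
          rcases eq_or_ne j i with rfl | hji
          · simp only [Finsupp.single_eq_same]
            omega
          · simp [Finsupp.single_eq_of_ne hji]
        rw [if_neg hne]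
  | add p1 p2 ih1 ih2 =>
    rw [map_add, MvPolynomial.coeff_add, MvPolynomial.coeff_add, ih1, ih2]
    ring

lemma pderiv_isHomogeneous {n k : ℕ} {i : Fin n} {P : MvPolynomial (Fin n) ℝ}
    (h : P.IsHomogeneous (k + 1)) : (MvPolynomial.pderiv i P).IsHomogeneous k := by
  apply isHomogeneous_of_degree
  intro d hd
  rw [coeff_pderiv] at hd
  have hc : MvPolynomial.coeff (d + Finsupp.single i 1) P ≠ 0 := by
    intro h0
    rw [h0, mul_zero] at hd
    exact hd rfl
  have hdeg := isHomogeneous_degree_of_coeff h hc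
  rw [degree_add_single] at hdeg
  omega

lemma pderiv_eq_zero_of_isHomogeneous_zero {n} {i : Fin n} {P : MvPolynomial (Fin n) ℝ}
    (h : P.IsHomogeneous 0) : MvPolynomial.pderiv i P = 0 := by
  ext d
  rw [coeff_pderiv, MvPolynomial.coeff_zero]
  rcases eq_or_ne (MvPolynomial.coeff (d + Finsupp.single i 1) P) 0 with h0 | h0
  · rw [h0, mul_zero]
  · exfalso
    have hdeg := isHomogeneous_degree_of_coeff h h0
    rw [degree_add_single] at hdeg
    omega

lemma Bp_X_mul {n} (i : Fin n) (P Q : MvPolynomial (Fin n) ℝ) :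
    Bp (MvPolynomial.X i * P) Q = Bp P (MvPolynomial.pderiv i Q) := by
  induction P using MvPolynomial.induction_on' with
  | monomial d a =>
    have hX : (MvPolynomial.X i : MvPolynomial (Fin n) ℝ) * MvPolynomial.monomial d a
        = MvPolynomial.monomial (d + Finsupp.single i 1) a := by
      rw [show (MvPolynomial.X i : MvPolynomial (Fin n) ℝ)
          = MvPolynomial.monomial (Finsupp.single i 1) 1 from rfl,
        MvPolynomial.monomial_mul, one_mul, add_comm]
    rw [hX, Bp_monomial_left, Bp_monomial_left, coeff_pderiv, wt_add_single]
    ring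
  | add p1 p2 ih1 ih2 =>
    rw [mul_add, Bp_add_left, Bp_add_left, ih1, ih2]

end AuxPoly
/-! ### The Fischer pairing on `W` and basic lemmas -/

@[simp] lemma pMul_apply (p q : ℕ) (i : Fin (p + q)) (f : W p q) (S : Finset (Fin (p + q))) :
    pMul p q i f S = X i * f S := rfl

@[simp] lemma pD_apply (p q : ℕ) (i : Fin (p + q)) (f : W p q) (S : Finset (Fin (p + q))) :
    pD p q i f S = pderiv i (f S) := rfl

@[simp] lemma xiMul_apply (p q : ℕ) (i : Fin (p + q)) (f : W p q) (S : Finset (Fin (p + q))) :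
    xiMul p q i f S = if i ∈ S then sgn p q i S • f (S.erase i) else 0 := rfl

@[simp] lemma xiD_apply (p q : ℕ) (i : Fin (p + q)) (f : W p q) (S : Finset (Fin (p + q))) :
    xiD p q i f S = if i ∈ S then 0 else sgn p q i (insert i S) • f (insert i S) := rfl

/-- The Fischer pairing on `W`. -/
def Bw (p q : ℕ) (f g : W p q) : ℝ := ∑ S, Bp (f S) (g S)

lemma Bw_zero_left (p q : ℕ) (g : W p q) : Bw p q 0 g = 0 := by
  unfold Bw
  simp only [Pi.zero_apply, Bp_zero_left, Finset.sum_const_zero]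

lemma Bw_zero_right (p q : ℕ) (f : W p q) : Bw p q f 0 = 0 := by
  unfold Bw
  simp only [Pi.zero_apply, Bp_zero_right, Finset.sum_const_zero]

lemma Bw_add_left (p q : ℕ) (f₁ f₂ g : W p q) :
    Bw p q (f₁ + f₂) g = Bw p q f₁ g + Bw p q f₂ g := by
  unfold Bw
  rw [← Finset.sum_add_distrib]
  exact Finset.sum_congr rfl fun S _ => by rw [Pi.add_apply, Bp_add_left]

lemma Bw_add_right (p q : ℕ) (f g₁ g₂ : W p q) :
    Bw p q f (g₁ + g₂) = Bw p q f g₁ + Bw p q f g₂ := by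
  unfold Bw
  rw [← Finset.sum_add_distrib]
  exact Finset.sum_congr rfl fun S _ => by rw [Pi.add_apply, Bp_add_right]

lemma Bw_smul_left (p q : ℕ) (c : ℝ) (f g : W p q) :
    Bw p q (c • f) g = c * Bw p q f g := by
  unfold Bw
  rw [Finset.mul_sum]
  exact Finset.sum_congr rfl fun S _ => by rw [Pi.smul_apply, Bp_smul_left]

lemma Bw_smul_right (p q : ℕ) (c : ℝ) (f g : W p q) :
    Bw p q f (c • g) = c * Bw p q f g := by
  unfold Bw
  rw [Finset.mul_sum]
  exact Finset.sum_congr rfl fun S _ => by rw [Pi.smul_apply, Bp_smul_right]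

lemma Bw_comm (p q : ℕ) (f g : W p q) : Bw p q f g = Bw p q g f :=
  Finset.sum_congr rfl fun S _ => Bp_comm _ _

lemma Bw_self_nonneg (p q : ℕ) (f : W p q) : 0 ≤ Bw p q f f :=
  Finset.sum_nonneg fun S _ => Bp_self_nonneg _

lemma Bw_eq_zero (p q : ℕ) {f : W p q} (h : Bw p q f f = 0) : f = 0 := by
  funext S
  have h0 := (Finset.sum_eq_zero_iff_of_nonneg
    (fun S _ => Bp_self_nonneg (f S))).mp h S (Finset.mem_univ S)
  exact Bp_self_eq_zero h0

lemma Bw_sum_left (p q : ℕ) {ι : Type*} (s : Finset ι) (h : ι → W p q) (g : W p q) :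
    Bw p q (∑ i ∈ s, h i) g = ∑ i ∈ s, Bw p q (h i) g := by
  classical
  induction s using Finset.induction_on with
  | empty => simp [Bw_zero_left]
  | insert _ _ hx ih => rw [Finset.sum_insert hx, Finset.sum_insert hx, Bw_add_left, ih]

lemma Bw_sum_right (p q : ℕ) {ι : Type*} (s : Finset ι) (f : W p q) (h : ι → W p q) :
    Bw p q f (∑ i ∈ s, h i) = ∑ i ∈ s, Bw p q f (h i) := by
  classical
  induction s using Finset.induction_on with
  | empty => simp [Bw_zero_right]
  | insert _ _ hx ih => rw [Finset.sum_insert hx, Finset.sum_insert hx, Bw_add_right, ih]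

/-! ### Adjointness -/

lemma Bw_pMul (p q : ℕ) (i : Fin (p + q)) (f g : W p q) :
    Bw p q (pMul p q i f) g = Bw p q f (pD p q i g) :=
  Finset.sum_congr rfl fun S _ => Bp_X_mul i (f S) (g S)

lemma Bw_xiMul (p q : ℕ) (i : Fin (p + q)) (f g : W p q) :
    Bw p q (xiMul p q i f) g = Bw p q f (xiD p q i g) := by
  classical
  unfold Bw
  rw [Finset.sum_congr rfl (fun S _ => show Bp (xiMul p q i f S) (g S)
      = if i ∈ S then sgn p q i S * Bp (f (S.erase i)) (g S) else 0 by
    rw [xiMul_apply]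
    split
    · rw [Bp_smul_left]
    · rw [Bp_zero_left])]
  rw [Finset.sum_congr rfl (fun S _ => show Bp (f S) (xiD p q i g S)
      = if i ∈ S then 0 else sgn p q i (insert i S) * Bp (f S) (g (insert i S)) by
    rw [xiD_apply]
    split
    · rw [Bp_zero_right]
    · rw [Bp_smul_right])]
  rw [Finset.sum_ite, Finset.sum_ite]
  simp only [Finset.sum_const_zero, add_zero, zero_add]
  refine Finset.sum_bij' (fun S _ => S.erase i) (fun S _ => insert i S) ?_ ?_ ?_ ?_ ?_
  · intro S hS
    simp only [Finset.mem_filter, Finset.mem_univ, true_and] at hS ⊢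
    exact Finset.notMem_erase i S
  · intro S hS
    simp only [Finset.mem_filter, Finset.mem_univ, true_and] at hS ⊢
    exact Finset.mem_insert_self i S
  · intro S hS
    simp only [Finset.mem_filter, Finset.mem_univ, true_and] at hS
    exact Finset.insert_erase hS
  · intro S hS
    simp only [Finset.mem_filter, Finset.mem_univ, true_and] at hS
    exact Finset.erase_insert hS
  · intro S hS
    simp only [Finset.mem_filter, Finset.mem_univ, true_and] at hS
    rw [Finset.insert_erase hS]

lemma pD_xiD (p q : ℕ) (i : Fin (p + q)) (g : W p q) :
    pD p q i (xiD p q i g) = xiD p q i (pD p q i g) := by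
  funext S
  rw [pD_apply, xiD_apply, xiD_apply, pD_apply]
  split
  · rw [map_zero]
  · simp

lemma opR_apply (p q : ℕ) (f : W p q) :
    opR p q f = ∑ i, eta p q i • pMul p q i (pMul p q i f) := by
  rw [opR, LinearMap.sum_apply]
  exact Finset.sum_congr rfl fun i _ => by
    rw [LinearMap.smul_apply, Module.End.mul_apply]

lemma opT_apply (p q : ℕ) (f : W p q) :
    opT p q f = ∑ i, eta p q i • pD p q i (pD p q i f) := by
  rw [opT, LinearMap.sum_apply]
  exact Finset.sum_congr rfl fun i _ => by
    rw [LinearMap.smul_apply, Module.End.mul_apply]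

lemma opQ_apply (p q : ℕ) (f : W p q) :
    opQ p q f = ∑ i, xiMul p q i (pMul p q i f) := by
  rw [opQ, LinearMap.sum_apply]
  exact Finset.sum_congr rfl fun i _ => by rw [Module.End.mul_apply]

lemma opQs_apply (p q : ℕ) (f : W p q) :
    opQs p q f = ∑ i, xiD p q i (pD p q i f) := by
  rw [opQs, LinearMap.sum_apply]
  exact Finset.sum_congr rfl fun i _ => by rw [Module.End.mul_apply]

lemma Bw_opR (p q : ℕ) (f g : W p q) :
    Bw p q (opR p q f) g = Bw p q f (opT p q g) := by
  rw [opR_apply, opT_apply, Bw_sum_left, Bw_sum_right]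
  refine Finset.sum_congr rfl fun i _ => ?_
  rw [Bw_smul_left, Bw_smul_right, Bw_pMul, Bw_pMul]

lemma Bw_opQ (p q : ℕ) (f g : W p q) :
    Bw p q (opQ p q f) g = Bw p q f (opQs p q g) := by
  rw [opQ_apply, opQs_apply, Bw_sum_left, Bw_sum_right]
  refine Finset.sum_congr rfl fun i _ => ?_
  rw [Bw_xiMul, Bw_pMul, pD_xiD]
/-! ### Bihomogeneous components -/

lemma mem_Wc {p q k κ : ℕ} {f : W p q} :
    f ∈ Wc p q k κ ↔ (∀ S, (f S).IsHomogeneous k) ∧ (∀ S, S.card ≠ κ → f S = 0) :=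
  Iff.rfl

lemma pMul_mem {p q k κ : ℕ} {f : W p q} (hf : f ∈ Wc p q k κ) (i : Fin (p + q)) :
    pMul p q i f ∈ Wc p q (k + 1) κ := by
  rw [mem_Wc] at hf ⊢
  refine ⟨fun S => ?_, fun S hS => ?_⟩
  · have h := (isHomogeneous_X ℝ i).mul (hf.1 S)
    rw [Nat.add_comm 1 k] at h
    exact h
  · rw [pMul_apply, hf.2 S hS, mul_zero]

lemma pD_mem {p q k κ : ℕ} {f : W p q} (hf : f ∈ Wc p q (k + 1) κ) (i : Fin (p + q)) :
    pD p q i f ∈ Wc p q k κ := by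
  rw [mem_Wc] at hf ⊢
  exact ⟨fun S => pderiv_isHomogeneous (hf.1 S),
    fun S hS => by rw [pD_apply, hf.2 S hS, map_zero]⟩

lemma pD_zero {p q κ : ℕ} {f : W p q} (hf : f ∈ Wc p q 0 κ) (i : Fin (p + q)) :
    pD p q i f = 0 := by
  funext S
  rw [pD_apply, Pi.zero_apply]
  exact pderiv_eq_zero_of_isHomogeneous_zero (hf.1 S)

lemma xiMul_mem {p q k κ : ℕ} {f : W p q} (hf : f ∈ Wc p q k κ) (i : Fin (p + q)) :
    xiMul p q i f ∈ Wc p q k (κ + 1) := by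
  rw [mem_Wc] at hf ⊢
  refine ⟨fun S => ?_, fun S hS => ?_⟩
  · rw [xiMul_apply]
    split
    · exact Submodule.smul_mem (homogeneousSubmodule (Fin (p + q)) ℝ k) _ (hf.1 _)
    · exact (homogeneousSubmodule (Fin (p + q)) ℝ k).zero_mem
  · rw [xiMul_apply]
    split
    · rename_i hi
      rw [hf.2 _ ?_, smul_zero]
      rw [Finset.card_erase_of_mem hi]
      have := Finset.card_pos.mpr ⟨i, hi⟩
      omega
    · rfl

lemma xiD_mem {p q k κ : ℕ} {f : W p q} (hf : f ∈ Wc p q k (κ + 1)) (i : Fin (p + q)) :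
    xiD p q i f ∈ Wc p q k κ := by
  rw [mem_Wc] at hf ⊢
  refine ⟨fun S => ?_, fun S hS => ?_⟩
  · rw [xiD_apply]
    split
    · exact (homogeneousSubmodule (Fin (p + q)) ℝ k).zero_mem
    · exact Submodule.smul_mem (homogeneousSubmodule (Fin (p + q)) ℝ k) _ (hf.1 _)
  · rw [xiD_apply]
    split
    · rfl
    · rename_i hi
      rw [hf.2 _ ?_, smul_zero]
      rw [Finset.card_insert_of_notMem hi]
      omega

lemma xiD_zero {p q : ℕ} {f : W p q} (hf : ∀ S, S.card ≠ 0 → f S = 0) (i : Fin (p + q)) :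
    xiD p q i f = 0 := by
  funext S
  rw [xiD_apply, Pi.zero_apply]
  split
  · rfl
  · rename_i hi
    rw [hf _ (by rw [Finset.card_insert_of_notMem hi]; omega), smul_zero]

lemma opR_mem {p q k κ : ℕ} {f : W p q} (hf : f ∈ Wc p q k κ) :
    opR p q f ∈ Wc p q (k + 2) κ := by
  rw [opR_apply]
  exact Submodule.sum_mem _ fun i _ =>
    Submodule.smul_mem _ _ (pMul_mem (pMul_mem hf i) i)

lemma opQ_mem {p q k κ : ℕ} {f : W p q} (hf : f ∈ Wc p q k κ) :
    opQ p q f ∈ Wc p q (k + 1) (κ + 1) := by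
  rw [opQ_apply]
  exact Submodule.sum_mem _ fun i _ => xiMul_mem (pMul_mem hf i) i

lemma opT_mem {p q k κ : ℕ} {f : W p q} (hf : f ∈ Wc p q (k + 2) κ) :
    opT p q f ∈ Wc p q k κ := by
  rw [opT_apply]
  exact Submodule.sum_mem _ fun i _ => Submodule.smul_mem _ _ (pD_mem (pD_mem hf i) i)

lemma opT_zero0 {p q κ : ℕ} {f : W p q} (hf : f ∈ Wc p q 0 κ) : opT p q f = 0 := by
  rw [opT_apply]
  refine Finset.sum_eq_zero fun i _ => ?_
  rw [pD_zero hf i, map_zero, smul_zero]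

lemma opT_zero1 {p q κ : ℕ} {f : W p q} (hf : f ∈ Wc p q 1 κ) : opT p q f = 0 := by
  rw [opT_apply]
  refine Finset.sum_eq_zero fun i _ => ?_
  rw [pD_zero (pD_mem hf i) i, smul_zero]

lemma opQs_mem {p q k κ : ℕ} {f : W p q} (hf : f ∈ Wc p q (k + 1) (κ + 1)) :
    opQs p q f ∈ Wc p q k κ := by
  rw [opQs_apply]
  exact Submodule.sum_mem _ fun i _ => xiD_mem (pD_mem hf i) i

lemma opQs_zero_k {p q κ : ℕ} {f : W p q} (hf : f ∈ Wc p q 0 κ) : opQs p q f = 0 := by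
  rw [opQs_apply]
  refine Finset.sum_eq_zero fun i _ => ?_
  rw [pD_zero hf i, map_zero]

lemma opQs_zero_kappa {p q k : ℕ} {f : W p q} (hf : f ∈ Wc p q k 0) : opQs p q f = 0 := by
  rw [opQs_apply]
  refine Finset.sum_eq_zero fun i _ => ?_
  refine xiD_zero (fun S hS => ?_) i
  rw [pD_apply, hf.2 S hS, map_zero]

instance Wc_finiteDimensional (p q k κ : ℕ) : FiniteDimensional ℝ ↥(Wc p q k κ) := by
  let L : ↥(Wc p q k κ) →ₗ[ℝ]
      (Finset (Fin (p + q)) → ↥(restrictTotalDegree (Fin (p + q)) ℝ k)) :=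
    { toFun := fun f S => ⟨f.1 S,
        (mem_restrictTotalDegree _ _ _).mpr (f.2.1 S).totalDegree_le⟩
      map_add' := fun a b => by
        funext S
        exact Subtype.ext rfl
      map_smul' := fun c a => by
        funext S
        exact Subtype.ext rfl }
  exact FiniteDimensional.of_injective L fun a b hab =>
    Subtype.ext (funext fun S => congrArg Subtype.val (congrFun hab S))

/-- The Fischer inner-product structure on a bihomogeneous component. -/
def WcCore (p q k κ : ℕ) : InnerProductSpace.Core ℝ ↥(Wc p q k κ) where
  inner x y := Bw p q x y
  conj_inner_symm x y := by simpa using Bw_comm p q (y : W p q) (x : W p q)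
  re_inner_nonneg x := by simpa using Bw_self_nonneg p q (x : W p q)
  add_left x y z := by simpa using Bw_add_left p q (x : W p q) (y : W p q) (z : W p q)
  smul_left x y r := by simpa using Bw_smul_left p q r (x : W p q) (y : W p q)
  definite x hx := Subtype.ext (Bw_eq_zero p q hx)

set_option maxHeartbeats 1000000 in
set_option synthInstance.maxHeartbeats 400000 in
lemma component_mem (p q k κ : ℕ) {x : W p q} (hx : x ∈ Wc p q k κ) :
    x ∈ (LinearMap.range (opR p q) ⊔ LinearMap.range (opQ p q)) ⊔
      (LinearMap.ker (opT p q) ⊓ LinearMap.ker (opQs p q)) := by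
  classical
  letI c : InnerProductSpace.Core ℝ ↥(Wc p q k κ) := WcCore p q k κ
  letI : NormedAddCommGroup ↥(Wc p q k κ) := c.toNormedAddCommGroup
  letI : UniformSpace ↥(Wc p q k κ) :=
    c.toNormedAddCommGroup.toMetricSpace.toPseudoMetricSpace.toUniformSpace
  letI : InnerProductSpace ℝ ↥(Wc p q k κ) := InnerProductSpace.ofCore c.toCore
  set RQ : Submodule ℝ (W p q) :=
    LinearMap.range (opR p q) ⊔ LinearMap.range (opQ p q) with hRQ
  set U : Submodule ℝ ↥(Wc p q k κ) := RQ.comap (Wc p q k κ).subtype with hU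
  haveI : CompleteSpace ↥U := FiniteDimensional.complete ℝ ↥U
  have hsup : U ⊔ Uᗮ = ⊤ := Submodule.sup_orthogonal_of_hasOrthogonalProjection
  have hxE : (⟨x, hx⟩ : ↥(Wc p q k κ)) ∈ U ⊔ Uᗮ := hsup ▸ Submodule.mem_top
  obtain ⟨u, hu, v, hv, huv⟩ := Submodule.mem_sup.mp hxE
  have hxuv : x = (u : W p q) + (v : W p q) := (congrArg Subtype.val huv).symm
  have hBv : ∀ y : W p q, y ∈ Wc p q k κ → y ∈ RQ → Bw p q y (v : W p q) = 0 := by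
    intro y hy hyRQ
    exact (Submodule.mem_orthogonal U v).mp hv ⟨y, hy⟩ hyRQ
  have hvE : (v : W p q) ∈ Wc p q k κ := v.2
  have hT : opT p q (v : W p q) = 0 := by
    rcases le_or_gt 2 k with hk | hk
    · obtain ⟨k', rfl⟩ : ∃ k', k = k' + 2 := ⟨k - 2, by omega⟩
      have h1 : opT p q (v : W p q) ∈ Wc p q k' κ := opT_mem hvE
      have h2 : opR p q (opT p q (v : W p q)) ∈ Wc p q (k' + 2) κ := opR_mem h1
      have h3 : opR p q (opT p q (v : W p q)) ∈ RQ :=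
        Submodule.mem_sup_left ⟨_, rfl⟩
      have h4 := hBv _ h2 h3
      rw [Bw_opR] at h4
      exact Bw_eq_zero p q h4
    · interval_cases k
      · exact opT_zero0 hvE
      · exact opT_zero1 hvE
  have hQs : opQs p q (v : W p q) = 0 := by
    rcases Nat.eq_zero_or_pos k with rfl | hk
    · exact opQs_zero_k hvE
    rcases Nat.eq_zero_or_pos κ with rfl | hκ
    · exact opQs_zero_kappa hvE
    obtain ⟨k', rfl⟩ : ∃ k', k = k' + 1 := ⟨k - 1, by omega⟩
    obtain ⟨κ', rfl⟩ : ∃ κ', κ = κ' + 1 := ⟨κ - 1, by omega⟩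
    have h1 : opQs p q (v : W p q) ∈ Wc p q k' κ' := opQs_mem hvE
    have h2 : opQ p q (opQs p q (v : W p q)) ∈ Wc p q (k' + 1) (κ' + 1) := opQ_mem h1
    have h3 : opQ p q (opQs p q (v : W p q)) ∈ RQ :=
      Submodule.mem_sup_right ⟨_, rfl⟩
    have h4 := hBv _ h2 h3
    rw [Bw_opQ] at h4
    exact Bw_eq_zero p q h4
  have huRQ : (u : W p q) ∈ RQ := Submodule.mem_comap.mp hu
  rw [hxuv]
  exact Submodule.add_mem _ (Submodule.mem_sup_left huRQ)
    (Submodule.mem_sup_right ⟨LinearMap.mem_ker.mpr hT, LinearMap.mem_ker.mpr hQs⟩)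

/-- Bihomogeneous component of an element of `W`. -/
def comp (p q k κ : ℕ) (f : W p q) : W p q :=
  fun S => if S.card = κ then homogeneousComponent k (f S) else 0

lemma comp_mem (p q k κ : ℕ) (f : W p q) : comp p q k κ f ∈ Wc p q k κ := by
  rw [mem_Wc]
  refine ⟨fun S => ?_, fun S hS => ?_⟩
  · unfold comp
    split
    · exact homogeneousComponent_isHomogeneous (n := k) (φ := f S)
    · exact (homogeneousSubmodule (Fin (p + q)) ℝ k).zero_mem
  · unfold comp
    rw [if_neg hS]

lemma eq_sum_comp (p q : ℕ) (f : W p q) :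
    f = ∑ k ∈ Finset.range (Finset.univ.sup (fun S => (f S).totalDegree) + 1),
        ∑ κ ∈ Finset.range (p + q + 1), comp p q k κ f := by
  classical
  funext S
  have hcard : S.card ∈ Finset.range (p + q + 1) := by
    rw [Finset.mem_range]
    have h1 : S.card ≤ p + q := by simpa using Finset.card_le_univ S
    omega
  simp only [Finset.sum_apply]
  have hinner : ∀ k, ∑ κ ∈ Finset.range (p + q + 1), comp p q k κ f S
      = homogeneousComponent k (f S) := by
    intro k
    unfold comp
    rw [Finset.sum_ite_eq (Finset.range (p + q + 1)) S.card
      (fun _ => homogeneousComponent k (f S)), if_pos hcard]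
  rw [Finset.sum_congr rfl fun k _ => hinner k]
  have hsub : Finset.range ((f S).totalDegree + 1) ⊆
      Finset.range (Finset.univ.sup (fun S => (f S).totalDegree) + 1) := by
    apply Finset.range_subset_range.mpr
    have h2 : (f S).totalDegree ≤ Finset.univ.sup (fun S => (f S).totalDegree) :=
      Finset.le_sup (f := fun T => (f T).totalDegree) (Finset.mem_univ S)
    omega
  rw [← Finset.sum_subset hsub (fun k _ hk => homogeneousComponent_eq_zero k (f S)
    (by simpa [Finset.mem_range, Nat.lt_succ_iff] using hk)),
    sum_homogeneousComponent]
/-- `W` is the internal direct sum of the ideal `R·W + Q·W` generated by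
`R = η^{ij} p_i p_j` and `Q = ξ^i p_i`, and of `ker T ∩ ker Q*`: the sum of these two
subspaces is all of `W` and their intersection is trivial. -/
theorem statement15 (p q : ℕ) (hn : 1 ≤ p + q) :
    ((LinearMap.range (opR p q) ⊔ LinearMap.range (opQ p q)) ⊔
        (LinearMap.ker (opT p q) ⊓ LinearMap.ker (opQs p q)) = ⊤) ∧
    ((LinearMap.range (opR p q) ⊔ LinearMap.range (opQ p q)) ⊓
        (LinearMap.ker (opT p q) ⊓ LinearMap.ker (opQs p q)) = ⊥) := by
  constructor
  · rw [eq_top_iff]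
    rintro f -
    rw [eq_sum_comp p q f]
    exact Submodule.sum_mem _ fun k _ => Submodule.sum_mem _ fun κ _ =>
      component_mem p q k κ (comp_mem p q k κ f)
  · rw [eq_bot_iff]
    rintro x ⟨hxRQ, hxK⟩
    have hT : opT p q x = 0 := hxK.1
    have hQs : opQs p q x = 0 := hxK.2
    obtain ⟨y, hy, z, hz, hyz⟩ := Submodule.mem_sup.mp hxRQ
    obtain ⟨a, rfl⟩ := hy
    obtain ⟨b, rfl⟩ := hz
    have hxx : Bw p q x x = 0 := by
      have h1 : Bw p q x x = Bw p q (opR p q a + opQ p q b) x := by rw [hyz]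
      rw [h1, Bw_add_left, Bw_opR, Bw_opQ, hT, hQs, Bw_zero_right, Bw_zero_right, add_zero]
    rw [Submodule.mem_bot]
    exact Bw_eq_zero p q hxx
end

end SpinQuant
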